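/- Let (R,B) be a ℤ-based rng with s-matrix s. Then the set of columns of s is closed under complex conjugation; more precisely, for every character χ_k and every index i one has χ_k(b_{~i}) = conj(χ_k(b_i)), i.e. s_{~i} = conj(s_i) where s_i denotes the i-th column of s. -/

import Mathlib

open scoped BigOperators

/-- The set of columns of the s-matrix of a `ℤ`-based rng is
closed under complex conjugation: for every character `χ` of `R_ℂ` and every
index `i` one has `χ(~b i) = conj (χ (b i))`, i.e. `s_{~i} = conj (s_i)`. -/
theorem zBasedRng_sMatrix_columns_conj
    {n : ℕ} (A : Type*) [CommRing A] [Algebra ℂ A]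
    (b : Module.Basis (Fin n) ℂ A) (N : Fin n → Fin n → Fin n → ℤ) (σ : Fin n → Fin n)
    (hmul : ∀ i j, b i * b j = ∑ m, (N i j m : ℂ) • b m)
    (hσ : ∀ i, σ (σ i) = i)
    (hσN : ∀ i j m, N (σ i) (σ j) m = N i j (σ m))
    (hτ : ∀ i j, (∑ m, (starRingEnd ℂ) (b.repr 1 m) * (N (σ i) j m : ℂ)) =
      if i = j then (1 : ℂ) else 0)
    (he : ∀ j, (starRingEnd ℂ) (b.repr 1 (σ j)) = b.repr 1 j) :
    ∀ (χ : A →ₐ[ℂ] ℂ) (i : Fin n), χ (b (σ i)) = (starRingEnd ℂ) (χ (b i)) := by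
  classical
  have hσinv : Function.Involutive σ := hσ
  -- coordinates of products
  have hN : ∀ i j t, b.repr (b i * b j) t = (N i j t : ℂ) := by
    intro i j t
    rw [hmul]
    simp [Finsupp.single_apply]
  have mulRepr : ∀ (p : Fin n) (u : A) (t : Fin n),
      b.repr (b p * u) t = ∑ j, b.repr u j * (N p j t : ℂ) := by
    intro p u t
    conv_lhs => rw [← b.sum_repr u, Finset.mul_sum]
    rw [map_sum, Finsupp.coe_finset_sum, Finset.sum_apply]
    refine Finset.sum_congr rfl fun j _ => ?_
    rw [mul_smul_comm, map_smul]
    simp [hN, smul_eq_mul]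
  -- generic trace extraction: N a c d = Σ_t ce t * repr (b (σ d) * (b a * b c)) t
  have G : ∀ a c d : Fin n, (N a c d : ℂ) =
      ∑ t, (starRingEnd ℂ) (b.repr 1 t) * b.repr (b (σ d) * (b a * b c)) t := by
    intro a c d
    have hD : ∀ t, b.repr (b (σ d) * (b a * b c)) t
        = ∑ k, (N a c k : ℂ) * N (σ d) k t := by
      intro t
      rw [mulRepr]
      exact Finset.sum_congr rfl fun k _ => by rw [hN]
    simp_rw [hD, Finset.mul_sum]
    rw [Finset.sum_comm]
    have hterm : ∀ k, (∑ t, (starRingEnd ℂ) (b.repr 1 t) * ((N a c k : ℂ) * N (σ d) k t))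
        = (N a c k : ℂ) * (if d = k then 1 else 0) := by
      intro k
      rw [← hτ d k, Finset.mul_sum]
      exact Finset.sum_congr rfl fun t _ => by ring
    simp_rw [hterm]
    simp
  -- the key symmetry (adjointness of the structure constants)
  have KeyC : ∀ i j m : Fin n, (N (σ i) j m : ℂ) = (N i m j : ℂ) := by
    intro i j m
    have hswap : ∀ t, b.repr (b (σ m) * (b (σ i) * b j)) t
        = b.repr (b (σ j) * (b i * b m)) (σ t) := by
      intro t
      have h1 : b.repr (b (σ j) * (b i * b m)) (σ t)
          = ∑ k, (N i m k : ℂ) * N (σ j) k (σ t) := by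
        rw [mulRepr]
        exact Finset.sum_congr rfl fun k _ => by rw [hN]
      have h2 : ∀ k, N (σ j) k (σ t) = N j (σ k) t := by
        intro k
        have := hσN j (σ k) (σ t)
        rwa [hσ k, hσ t] at this
      have h3 : b.repr (b (σ j) * (b i * b m)) (σ t)
          = ∑ k, (N (σ i) (σ m) k : ℂ) * N j k t := by
        rw [h1]
        simp_rw [h2]
        rw [← Fintype.sum_bijective σ hσinv.bijective _ _ (fun k => rfl)]
        refine Finset.sum_congr rfl fun k _ => ?_
        rw [hσ k, ← hσN i m k]
      have h4 : b.repr (b (σ m) * (b (σ i) * b j)) t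
          = ∑ k, (N (σ i) (σ m) k : ℂ) * N j k t := by
        have hring : b (σ m) * (b (σ i) * b j) = b j * (b (σ i) * b (σ m)) := by ring
        rw [hring, mulRepr]
        exact Finset.sum_congr rfl fun k _ => by rw [hN]
      rw [h3, h4]
    have e1 : (N (σ i) j m : ℂ)
        = ∑ t, (starRingEnd ℂ) (b.repr 1 t) * b.repr (b (σ j) * (b i * b m)) (σ t) := by
      rw [G (σ i) j m]
      exact Finset.sum_congr rfl fun t _ => by rw [hswap]
    have e2 : (N (σ i) j m : ℂ)
        = ∑ t, (starRingEnd ℂ) (b.repr 1 (σ t)) * b.repr (b (σ j) * (b i * b m)) t := by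
      rw [e1, ← Fintype.sum_bijective σ hσinv.bijective _ _ (fun t => rfl)]
      exact Finset.sum_congr rfl fun t _ => by rw [hσ t]
    have hDint : ∀ t, (starRingEnd ℂ) (b.repr (b (σ j) * (b i * b m)) t)
        = b.repr (b (σ j) * (b i * b m)) t := by
      intro t
      have hD : b.repr (b (σ j) * (b i * b m)) t = ∑ k, (N i m k : ℂ) * N (σ j) k t := by
        rw [mulRepr]; exact Finset.sum_congr rfl fun k _ => by rw [hN]
      rw [hD, map_sum]
      exact Finset.sum_congr rfl fun k _ => by
        rw [map_mul (starRingEnd ℂ), map_intCast, map_intCast]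
    have e3 : (N (σ i) j m : ℂ) = (starRingEnd ℂ) ((N i m j : ℂ)) := by
      rw [e2, G i m j, map_sum]
      refine Finset.sum_congr rfl fun t _ => ?_
      rw [he t, map_mul (starRingEnd ℂ), Complex.conj_conj, hDint t]
    rw [e3, map_intCast]
  -- adjoint identity at the level of coordinate sums
  have Adj : ∀ (p : Fin n) (u w : A),
      (∑ t, (starRingEnd ℂ) (b.repr (b p * u) t) * b.repr w t)
      = ∑ t, (starRingEnd ℂ) (b.repr u t) * b.repr (b (σ p) * w) t := by
    intro p u w
    have lhs : ∀ t, (starRingEnd ℂ) (b.repr (b p * u) t) * b.repr w t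
        = ∑ j, (starRingEnd ℂ) (b.repr u j) * ((N p j t : ℂ) * b.repr w t) := by
      intro t
      rw [mulRepr, map_sum, Finset.sum_mul]
      refine Finset.sum_congr rfl fun j _ => ?_
      rw [map_mul (starRingEnd ℂ), map_intCast]
      ring
    have rhs : ∀ t, (starRingEnd ℂ) (b.repr u t) * b.repr (b (σ p) * w) t
        = ∑ j, (starRingEnd ℂ) (b.repr u t) * ((N p t j : ℂ) * b.repr w j) := by
      intro t
      rw [mulRepr, Finset.mul_sum]
      refine Finset.sum_congr rfl fun j _ => ?_
      rw [KeyC]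
      ring
    simp_rw [lhs, rhs]
    rw [Finset.sum_comm]
  intro χ i
  -- transport to EuclideanSpace
  set φ : A ≃ₗ[ℂ] EuclideanSpace ℂ (Fin n) :=
    b.equivFun.trans (WithLp.linearEquiv 2 ℂ (Fin n → ℂ)).symm with hφdef
  have hφ : ∀ (x : A) (t : Fin n), φ x t = b.repr x t := by
    intro x t
    simp [hφdef, Module.Basis.equivFun_apply]
  have hinner : ∀ x y : A, (inner ℂ (φ x) (φ y) : ℂ)
      = ∑ t, (starRingEnd ℂ) (b.repr x t) * b.repr y t := by
    intro x y
    rw [PiLp.inner_apply]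
    exact Finset.sum_congr rfl fun t _ => by rw [RCLike.inner_apply, hφ, hφ, mul_comm]
  have AdjI : ∀ (p : Fin n) (u w : A),
      (inner ℂ (φ (b p * u)) (φ w) : ℂ) = inner ℂ (φ u) (φ (b (σ p) * w)) := by
    intro p u w
    rw [hinner, hinner, Adj]
  -- kernel of χ and its image
  set K' : Submodule ℂ (EuclideanSpace ℂ (Fin n)) :=
    (LinearMap.ker χ.toLinearMap).map (φ : A →ₗ[ℂ] EuclideanSpace ℂ (Fin n)) with hK'def
  have hK'mem : ∀ x : A, χ x = 0 → φ x ∈ K' := by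
    intro x hx
    exact ⟨x, by simpa [LinearMap.mem_ker] using hx, rfl⟩
  have hK'top : K' ≠ ⊤ := by
    intro h
    have h1 : φ (1 : A) ∈ K' := h ▸ Submodule.mem_top
    obtain ⟨x, hx, hxe⟩ := h1
    have hx1 : x = 1 := φ.injective hxe
    rw [hx1] at hx
    simp [LinearMap.mem_ker] at hx
  have hbot : K'ᗮ ≠ ⊥ := fun h => hK'top (Submodule.orthogonal_eq_bot_iff.mp h)
  obtain ⟨v', hv'mem, hv'ne⟩ := (Submodule.ne_bot_iff _).mp hbot
  set v : A := φ.symm v' with hvdef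
  have hφv : φ v = v' := φ.apply_symm_apply v'
  have horth : ∀ x : A, χ x = 0 → (inner ℂ (φ x) v' : ℂ) = 0 := by
    intro x hx
    exact (Submodule.mem_orthogonal _ _).mp hv'mem (φ x) (hK'mem x hx)
  -- `v` is a joint eigenvector with eigenvalue system `χ`
  have stepA : ∀ p : Fin n, φ (b p * v) ∈ K'ᗮ := by
    intro p
    rw [Submodule.mem_orthogonal]
    rintro u' ⟨x, hx, rfl⟩
    have hx0 : χ x = 0 := by simpa [LinearMap.mem_ker] using hx
    have h1 : (inner ℂ (φ (b p * v)) (φ x) : ℂ) = 0 := by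
      rw [AdjI, hφv]
      have hker : χ (b (σ p) * x) = 0 := by rw [map_mul, hx0, mul_zero]
      calc (inner ℂ v' (φ (b (σ p) * x)) : ℂ)
          = (starRingEnd ℂ) (inner ℂ (φ (b (σ p) * x)) v' : ℂ) := by
            rw [← inner_conj_symm]
        _ = 0 := by rw [horth _ hker, map_zero]
    calc (inner ℂ (φ x) (φ (b p * v)) : ℂ)
        = (starRingEnd ℂ) (inner ℂ (φ (b p * v)) (φ x) : ℂ) := by rw [← inner_conj_symm]
      _ = 0 := by rw [h1, map_zero]
  have stepB : ∀ p : Fin n, φ (b p * v) = χ (b p) • v' := by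
    intro p
    have hk : χ (b p * v - χ (b p) • v) = 0 := by
      rw [map_sub, map_smul, map_mul, smul_eq_mul, sub_self]
    have hmem1 : φ (b p * v - χ (b p) • v) ∈ K' := hK'mem _ hk
    have hmem2 : φ (b p * v - χ (b p) • v) ∈ K'ᗮ := by
      rw [map_sub, map_smul, hφv]
      exact Submodule.sub_mem _ (stepA p) (Submodule.smul_mem _ _ hv'mem)
    have h0 : φ (b p * v - χ (b p) • v) = 0 := by
      have hm := Submodule.mem_inf.mpr ⟨hmem1, hmem2⟩
      rwa [Submodule.inf_orthogonal_eq_bot, Submodule.mem_bot] at hm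
    exact sub_eq_zero.mp (by rwa [map_sub, map_smul, hφv] at h0)
  -- conclude by comparing eigenvalues of adjoint operators
  have hvv : (inner ℂ v' v' : ℂ) ≠ 0 := inner_self_ne_zero.mpr hv'ne
  have lhs : (inner ℂ (φ (b i * v)) (φ v) : ℂ) = (starRingEnd ℂ) (χ (b i)) * inner ℂ v' v' := by
    rw [stepB i, hφv, inner_smul_left]
  have rhs : (inner ℂ (φ (b i * v)) (φ v) : ℂ) = χ (b (σ i)) * inner ℂ v' v' := by
    rw [AdjI, hφv, stepB (σ i), inner_smul_right]
  have := lhs ▸ rhs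
  exact mul_right_cancel₀ hvv this.symm ▸ rfl
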